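/- Let $f:\{0,1\}^n\to\{0,1\}$ be balanced and $f_0$ a dictatorship function. If $N_{\alpha}(f)\leq N_{\alpha}(f_0)$ for all $\alpha\in[1,2]$ (the Li–Médard conjecture for $f$), then $\sum_x T_pf(x)\log T_pf(x) \leq \sum_x T_pf_0(x)\log T_pf_0(x) = 2^n\big(p\log p + (1-p)\log(1-p)\big)/2 \cdot 2$ — i.e., the unsymmetrized Courtade–Kumar inequality holds for $f$. -/

import Mathlib

open Finset Real Filter Topology

/-- The noise operator `T_p` applied to a Boolean function on the Hamming cube. -/
noncomputable def Tp (n : ℕ) (p : ℝ) (f : (Fin n → Bool) → Bool) (x : Fin n → Bool) : ℝ :=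
  ∑ y : Fin n → Bool,
    p ^ hammingDist x y * (1 - p) ^ (n - hammingDist x y) * (if f y then 1 else 0)

/-- A Boolean function is balanced if it takes the value 1 exactly half the time. -/
def IsBalanced (n : ℕ) (f : (Fin n → Bool) → Bool) : Prop :=
  ∑ y : Fin n → Bool, (if f y then (1 : ℝ) else 0) = 2 ^ n / 2

/-- Dictatorship function on coordinate `i`. -/
def dict (n : ℕ) (i : Fin n) : (Fin n → Bool) → Bool := fun y => y i

/-- `N_α(f) = ∑_x (T_p f x)^α` (real power). -/
noncomputable def Nal (n : ℕ) (p : ℝ) (f : (Fin n → Bool) → Bool) (α : ℝ) : ℝ :=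
  ∑ x : Fin n → Bool, Tp n p f x ^ α

/-- Symmetrized version `N^sym_α(f) = ∑_x (T_p f x)^α + (1 - T_p f x)^α`. -/
noncomputable def Nsym (n : ℕ) (p : ℝ) (f : (Fin n → Bool) → Bool) (α : ℝ) : ℝ :=
  ∑ x : Fin n → Bool, (Tp n p f x ^ α + (1 - Tp n p f x) ^ α)

/-- Binary entropy function, in bits. -/
noncomputable def binEnt (t : ℝ) : ℝ := -(t * Real.logb 2 t) - (1 - t) * Real.logb 2 (1 - t)

/-- Mutual information `I(f(Y); X)` for a balanced Boolean function `f`,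
with `X` uniform on the cube and `Y` the output of a BSC(p) on input `X`. -/
noncomputable def MI (n : ℕ) (p : ℝ) (f : (Fin n → Bool) → Bool) : ℝ :=
  1 - ((2 : ℝ) ^ n)⁻¹ * ∑ x : Fin n → Bool, binEnt (Tp n p f x)

lemma weight_eq (n : ℕ) (p : ℝ) (x y : Fin n → Bool) :
    p ^ hammingDist x y * (1 - p) ^ (n - hammingDist x y) =
      ∏ j : Fin n, (if x j = y j then 1 - p else p) := by
  rw [Finset.prod_ite (f := fun _ => (1 : ℝ) - p) (g := fun _ => p),
    Finset.prod_const, Finset.prod_const]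
  have h1 : (Finset.univ.filter fun j => ¬ x j = y j).card = hammingDist x y := rfl
  have h2 : (Finset.univ.filter fun j => x j = y j).card = n - hammingDist x y := by
    have h3 := Finset.card_filter_add_card_filter_not
      (s := (univ : Finset (Fin n))) (p := fun j => x j = y j)
    have h4 : (univ : Finset (Fin n)).card = n := by simp
    have h5 : hammingDist x y ≤ n := by simpa using (hammingDist_le_card_fintype (x := x) (y := y))
    omega
  rw [h1, h2, mul_comm]

lemma weight_sum (n : ℕ) (p : ℝ) (y : Fin n → Bool) :
    ∑ x : Fin n → Bool, p ^ hammingDist x y * (1 - p) ^ (n - hammingDist x y) = 1 := by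
  simp_rw [weight_eq]
  rw [← Fintype.piFinset_univ,
    ← Finset.prod_univ_sum (t := fun _ => (univ : Finset Bool))
      (f := fun j b => if b = y j then (1:ℝ) - p else p)]
  apply Finset.prod_eq_one
  intro j _
  cases hy : y j <;> simp [hy] <;> ring

lemma Tp_dict (n : ℕ) (p : ℝ) (i : Fin n) (x : Fin n → Bool) :
    Tp n p (dict n i) x = if x i then 1 - p else p := by
  unfold Tp dict
  simp_rw [weight_eq]
  have key : ∀ y : Fin n → Bool,
      (∏ j, (if x j = y j then 1 - p else p)) * (if y i then (1:ℝ) else 0)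
      = ∏ j, ((if x j = y j then 1 - p else p) * (if j = i then (if y j then 1 else 0) else 1)) := by
    intro y
    rw [Finset.prod_mul_distrib, Finset.prod_ite_eq' univ i (fun j => if y j then (1:ℝ) else 0)]
    simp
  simp_rw [key]
  rw [← Fintype.piFinset_univ,
    ← Finset.prod_univ_sum (t := fun _ => (univ : Finset Bool))
      (f := fun j b => (if x j = b then (1:ℝ) - p else p) * (if j = i then (if b then 1 else 0) else 1))]
  rw [Fintype.prod_eq_single i ?h]
  · cases hx : x i <;> simp [hx]
  · intro j hj
    cases hx : x j <;> simp [hx, hj] <;> ring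

lemma sum_coord (n : ℕ) (i : Fin n) (F : Bool → ℝ) :
    ∑ x : Fin n → Bool, F (x i) = 2 ^ n / 2 * (F true + F false) := by
  have hinv : Function.Involutive (fun x : Fin n → Bool => Function.update x i (!(x i))) := by
    intro x; funext j
    by_cases h : j = i
    · subst h; simp
    · simp [Function.update, h]
  have h1 : ∑ x : Fin n → Bool, F (x i) = ∑ x : Fin n → Bool, F (!(x i)) := by
    rw [← Equiv.sum_comp hinv.toPerm (fun x => F (x i))]
    apply Finset.sum_congr rfl
    intro x _
    simp [Function.Involutive.toPerm]
  have h2 : (2:ℝ) * ∑ x : Fin n → Bool, F (x i)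
      = ∑ x : Fin n → Bool, (F (x i) + F (!(x i))) := by
    rw [Finset.sum_add_distrib, ← h1]; ring
  have h3 : ∀ x : Fin n → Bool, F (x i) + F (!(x i)) = F true + F false := by
    intro x; cases hx : x i <;> simp <;> ring
  rw [Finset.sum_congr rfl (fun x _ => h3 x), Finset.sum_const, Finset.card_univ] at h2
  have hcard : (Fintype.card (Fin n → Bool)) = 2 ^ n := by simp
  rw [hcard, nsmul_eq_mul] at h2
  push_cast at h2
  linarith

lemma Tp_pos (n : ℕ) (p : ℝ) (hp : 0 < p) (hp2 : p < 1/2)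
    (f : (Fin n → Bool) → Bool) (hf : IsBalanced n f) (x : Fin n → Bool) :
    0 < Tp n p f x := by
  have h1p : 0 < 1 - p := by linarith
  obtain ⟨y0, hy0⟩ : ∃ y, f y = true := by
    by_contra h
    push_neg at h
    have h0 : ∑ y : Fin n → Bool, (if f y then (1:ℝ) else 0) = 0 :=
      Finset.sum_eq_zero (by intro y _; simp [h y])
    rw [IsBalanced] at hf
    rw [h0] at hf
    have : (0:ℝ) < 2 ^ n / 2 := by positivity
    linarith
  apply Finset.sum_pos'
  · intro y _
    have : (0:ℝ) ≤ if f y then 1 else 0 := by positivity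
    positivity
  · refine ⟨y0, Finset.mem_univ y0, ?_⟩
    rw [hy0]
    simp only [if_true]
    positivity

lemma Nal_one (n : ℕ) (p : ℝ) (f : (Fin n → Bool) → Bool) :
    Nal n p f 1 = ∑ y : Fin n → Bool, (if f y then (1:ℝ) else 0) := by
  unfold Nal
  simp_rw [Real.rpow_one]
  unfold Tp
  rw [Finset.sum_comm]
  apply Finset.sum_congr rfl
  intro y _
  rw [← Finset.sum_mul, weight_sum, one_mul]

lemma hasDerivAt_Nal (n : ℕ) (p : ℝ) (f : (Fin n → Bool) → Bool)
    (hpos : ∀ x, 0 < Tp n p f x) :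
    HasDerivAt (Nal n p f)
      (∑ x : Fin n → Bool, Tp n p f x * Real.log (Tp n p f x)) 1 := by
  have h : ∀ x ∈ (univ : Finset (Fin n → Bool)), HasDerivAt (fun α : ℝ => Tp n p f x ^ α)
      (Tp n p f x * Real.log (Tp n p f x)) 1 := by
    intro x _
    have := (Real.hasStrictDerivAt_const_rpow (hpos x) 1).hasDerivAt
    rwa [Real.rpow_one] at this
  exact HasDerivAt.fun_sum h

/-- If the Li–Médard conjecture holds for a balanced `f` (i.e. `N_α(f) ≤ N_α(f_0)` for all
`α ∈ [1,2]`), then the unsymmetrized Courtade–Kumar inequality holds for `f`, where the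
dictatorship value is `2^{n-1}(p log p + (1-p) log(1-p))`. -/
theorem li_medard_implies_unsym_CK (n : ℕ) (p : ℝ) (hp : 0 < p) (hp2 : p < 1/2)
    (f : (Fin n → Bool) → Bool) (hf : IsBalanced n f) (i : Fin n)
    (hLM : ∀ α ∈ Set.Icc (1 : ℝ) 2, Nal n p f α ≤ Nal n p (dict n i) α) :
    ∑ x : Fin n → Bool, Tp n p f x * Real.log (Tp n p f x) ≤
      ∑ x : Fin n → Bool, Tp n p (dict n i) x * Real.log (Tp n p (dict n i) x) ∧
    ∑ x : Fin n → Bool, Tp n p (dict n i) x * Real.log (Tp n p (dict n i) x) =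
      2 ^ n / 2 * (p * Real.log p + (1 - p) * Real.log (1 - p)) := by
  have h1p : (0:ℝ) < 1 - p := by linarith
  -- second part
  have hval : ∑ x : Fin n → Bool, Tp n p (dict n i) x * Real.log (Tp n p (dict n i) x) =
      2 ^ n / 2 * (p * Real.log p + (1 - p) * Real.log (1 - p)) := by
    have : ∀ x : Fin n → Bool, Tp n p (dict n i) x * Real.log (Tp n p (dict n i) x)
        = (fun b : Bool => (if b then 1 - p else p) * Real.log (if b then 1 - p else p)) (x i) := by
      intro x; rw [Tp_dict]
    rw [Finset.sum_congr rfl (fun x _ => this x),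
      sum_coord n i (fun b => (if b then 1 - p else p) * Real.log (if b then 1 - p else p))]
    norm_num
    ring
  refine ⟨?_, hval⟩
  -- equality at α = 1
  have hpos : ∀ x, 0 < Tp n p f x := Tp_pos n p hp hp2 f hf
  have hdictbal : IsBalanced n (dict n i) := by
    unfold IsBalanced
    have : ∀ x : Fin n → Bool, (if dict n i x then (1:ℝ) else 0)
        = (fun b : Bool => if b then (1:ℝ) else 0) (x i) := fun x => rfl
    rw [Finset.sum_congr rfl (fun x _ => this x),
      sum_coord n i (fun b => if b then (1:ℝ) else 0)]
    norm_num
  have heq1 : Nal n p f 1 = Nal n p (dict n i) 1 := by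
    rw [Nal_one, Nal_one, hf, hdictbal]
  -- derivative comparison
  set D : ℝ := ∑ x : Fin n → Bool, Tp n p f x * Real.log (Tp n p f x) with hD
  set D0 : ℝ := ∑ x : Fin n → Bool, Tp n p (dict n i) x * Real.log (Tp n p (dict n i) x) with hD0
  have hder : HasDerivAt (fun α => Nal n p (dict n i) α - Nal n p f α) (D0 - D) 1 := by
    exact ((hasDerivAt_Nal n p (dict n i) (Tp_pos n p hp hp2 _ hdictbal)).sub
      (hasDerivAt_Nal n p f hpos))
  have hslope : Tendsto (slope (fun α => Nal n p (dict n i) α - Nal n p f α) 1)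
      (𝓝[>] 1) (𝓝 (D0 - D)) := by
    exact (hasDerivAt_iff_tendsto_slope.mp hder).mono_left
      (nhdsWithin_mono 1 (fun a ha => ne_of_gt ha))
  have hnonneg : ∀ᶠ α in 𝓝[>] (1:ℝ),
      0 ≤ slope (fun α => Nal n p (dict n i) α - Nal n p f α) 1 α := by
    filter_upwards [Ioc_mem_nhdsGT_of_mem (by constructor <;> norm_num : (1:ℝ) ∈ Set.Ico 1 2)]
      with α hα
    rw [slope_def_field]
    have h1 : Nal n p f α ≤ Nal n p (dict n i) α := hLM α ⟨le_of_lt hα.1, hα.2⟩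
    apply div_nonneg
    · linarith [heq1]
    · linarith [hα.1]
  have : 0 ≤ D0 - D := ge_of_tendsto hslope hnonneg
  linarith
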